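/- Let X, Y be real Banach spaces, N : X → Y* defined by N(x) = Ax − F + Γ(x,x,·) with A ∈ L(X;Y*), F ∈ Y*, and Γ : X×X×Y → ℝ a bounded trilinear form. Let u ∈ X be a regular solution, i.e. N(u) = 0 and the bilinear form DN(u;·,·) = a + b, where a(x,y) = ⟨Ax,y⟩ and b = Γ(u,·,·) + Γ(·,u,·), satisfies the inf-sup condition with constant β > 0. Then for any ξ ∈ X with ‖Γ‖·‖u−ξ‖_X < β one has ‖u − ξ‖_X ≤ ‖N(ξ)‖_{Y*} / (β − ‖Γ‖·‖u−ξ‖_X). -/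

import Mathlib

/-!
Statement 4 (abstract a posteriori bound, eq. (3.11) of Theorem 3.4).
`N(x) = Ax − F + Γ(x,x,·)`, `u` a regular solution (inf-sup condition with β > 0 for
DN(u;·,·) = a + b, written in the equivalent operator form β‖x‖ ≤ ‖DN(u)x‖_{Y*}).
-/

theorem abstract_reliability
    {X Y : Type*} [NormedAddCommGroup X] [NormedSpace ℝ X]
    [NormedAddCommGroup Y] [NormedSpace ℝ Y]
    (A : X →L[ℝ] StrongDual ℝ Y) (F : StrongDual ℝ Y)
    (Γ : X →L[ℝ] X →L[ℝ] StrongDual ℝ Y)   -- bounded trilinear form on X×X×Y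
    (u : X)
    (hu : A u + Γ u u = F)                       -- N(u) = 0
    (β : ℝ) (hβ : 0 < β)
    -- inf-sup condition for DN(u;ξ,y) = a(ξ,y) + Γ(u,ξ,y) + Γ(ξ,u,y)
    (hinfsup : ∀ x : X, β * ‖x‖ ≤ ‖A x + Γ u x + Γ.flip u x‖)
    (ξ : X) (hclose : @norm _ (@ContinuousLinearMap.hasOpNorm ℝ ℝ X (X →L[ℝ] StrongDual ℝ Y) _ _ _ _ _ _ (RingHom.id ℝ)) Γ * ‖u - ξ‖ < β) :
    ‖u - ξ‖ ≤ ‖A ξ + Γ ξ ξ - F‖ / (β - @norm _ (@ContinuousLinearMap.hasOpNorm ℝ ℝ X (X →L[ℝ] StrongDual ℝ Y) _ _ _ _ _ _ (RingHom.id ℝ)) Γ * ‖u - ξ‖) := by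
  letI : Norm (X →L[ℝ] X →L[ℝ] StrongDual ℝ Y) := @ContinuousLinearMap.hasOpNorm ℝ ℝ X (X →L[ℝ] StrongDual ℝ Y) _ _ _ _ _ _ (RingHom.id ℝ)
  set e := u - ξ with he
  -- key identity: N(ξ) = -(A e + Γ u e + Γ e u) + Γ e e
  have hid : A ξ + Γ ξ ξ - F = -(A e + Γ u e + Γ.flip u e) + Γ e e := by
    rw [← hu, he]
    simp only [ContinuousLinearMap.flip_apply, map_sub, ContinuousLinearMap.sub_apply]
    abel
  have h1 : ‖A e + Γ u e + Γ.flip u e‖ ≤ ‖A ξ + Γ ξ ξ - F‖ + ‖Γ‖ * ‖e‖ * ‖e‖ := by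
    have : A e + Γ u e + Γ.flip u e = -(A ξ + Γ ξ ξ - F) + Γ e e := by
      rw [hid]; abel
    rw [this]
    calc ‖-(A ξ + Γ ξ ξ - F) + Γ e e‖ ≤ ‖-(A ξ + Γ ξ ξ - F)‖ + ‖Γ e e‖ := norm_add_le _ _
      _ ≤ ‖A ξ + Γ ξ ξ - F‖ + ‖Γ‖ * ‖e‖ * ‖e‖ := by
          rw [norm_neg]
          exact add_le_add_right (Γ.le_opNorm₂ e e) _
  have h2 : (β - ‖Γ‖ * ‖e‖) * ‖e‖ ≤ ‖A ξ + Γ ξ ξ - F‖ := by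
    have := (hinfsup e).trans h1
    nlinarith [this]
  have hpos : 0 < β - ‖Γ‖ * ‖e‖ := by linarith
  exact (le_div_iff₀ hpos).2 (by linarith [h2])
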